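/- arXiv:1802.08445 — 2 statements merged into one kernel-verified Lean document; each statement's English description precedes it below -/
import Mathlib

section
/- Let F = ⟨A, R, W, S⟩ be a semiring-based weighted argumentation framework over an absorptive c-semiring S, let Z ⊆ A be w-conflict-free, and fix z ∈ Z. Define the reduced WAF F' on A' = {z} ∪ (A \ Z) by W'(z, j) = ⊗_{i ∈ Z} W(i, j) and W'(j, z) = ⊗_{i ∈ Z} W(j, i) for j ∈ A \ Z, W'(j, j') = W(j, j') for j, j' ∈ A \ Z, and W'(z, z) = ⊤. Then Z is a w-complete extension of F if and only if {z} is a w-complete extension of F'. -/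
open Finset

variable {A : Type*} [Fintype A] [DecidableEq A] {S : Type*} [CommSemiring S]

/-- The order induced by the idempotent addition of a c-semiring: `a ≤ₛ b` iff `a + b = b`. -/
def sLE (a b : S) : Prop := a + b = b

/-- The attack weight `W(B, D)` from a set of arguments `B` to a set `D`:
the semiring product of all pairwise weights. -/
def Wsets (W : A → A → S) (B D : Finset A) : S := ∏ b ∈ B, ∏ d ∈ D, W b d

/-- `B` is w-conflict-free iff `W(B, B) = ⊤` (here `⊤` is the multiplicative unit `1`). -/
def wConflictFree (W : A → A → S) (B : Finset A) : Prop := Wsets W B B = 1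

/-- Within the framework whose set of arguments is `U`, the set `B` w-defends `b`:
for every attacker `a ∈ U` of `b` (i.e. `W a b ≠ ⊤`), `W(a, B ∪ {b}) ≥ₛ W(B, a)`. -/
def wDefendsIn (W : A → A → S) (U B : Finset A) (b : A) : Prop :=
  ∀ a ∈ U, W a b ≠ 1 → sLE (Wsets W B {a}) (Wsets W {a} (insert b B))

/-- `B` is w-admissible in the framework with argument set `U`:
`B ⊆ U`, `B` is w-conflict-free, and `B` w-defends each of its members. -/
def wAdmissibleIn (W : A → A → S) (U B : Finset A) : Prop :=
  B ⊆ U ∧ wConflictFree W B ∧ ∀ b ∈ B, wDefendsIn W U B b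

/-- `B` is a w-stable extension: w-admissible and every argument of `U` outside `B`
is attacked by some member of `B`. -/
def wStableIn (W : A → A → S) (U B : Finset A) : Prop :=
  wAdmissibleIn W U B ∧ ∀ a ∈ U, a ∉ B → ∃ b ∈ B, W b a ≠ 1

/-- `B` is a w-complete extension: w-admissible and it contains every argument `b`
such that `B ∪ {b}` is w-admissible. -/
def wCompleteIn (W : A → A → S) (U B : Finset A) : Prop :=
  wAdmissibleIn W U B ∧ ∀ b ∈ U, wAdmissibleIn W U (insert b B) → b ∈ B

/-- `B` is a w-preferred extension: a ⊆-maximal w-admissible subset. -/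
def wPreferredIn (W : A → A → S) (U B : Finset A) : Prop :=
  wAdmissibleIn W U B ∧ ∀ C : Finset A, wAdmissibleIn W U C → B ⊆ C → C = B

section AuxContraction

variable {S : Type*} [CommSemiring S]

lemma aux_sle_top (habs : ∀ s t : S, s + s * t = s) (t : S) : sLE t 1 := by
  have := habs 1 t; simpa [sLE, add_comm] using this

lemma aux_mul_eq_one (habs : ∀ s t : S, s + s * t = s) {x y : S}
    (h : x * y = 1) : x = 1 ∧ y = 1 := by
  have key : ∀ u v : S, u * v = 1 → u = 1 := by
    intro u v huv
    have h1 : u + 1 = 1 := aux_sle_top habs u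
    have h2 : u + 1 = u := by have := habs u v; rwa [huv] at this
    rw [← h2]; exact h1
  exact ⟨key x y h, key y x (by rwa [mul_comm] at h)⟩

lemma aux_prod_one {ι : Type*} (habs : ∀ s t : S, s + s * t = s)
    (Z : Finset ι) (f : ι → S) (h : ∏ i ∈ Z, f i = 1) : ∀ i ∈ Z, f i = 1 := by
  intro i hi
  obtain ⟨c, hc⟩ := Finset.dvd_prod_of_mem f hi
  rw [hc] at h
  exact (aux_mul_eq_one habs h).1

end AuxContraction

/-- Matrix reduction by contraction of a w-conflict-free set Z into a single
argument z ∈ Z: Z is a w-complete extension in F iff {z} is a w-complete extension in the reduced framework F',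
whose argument set is {z} ∪ (A \ Z) and whose weights W' are obtained by
combining the rows and columns of Z. -/
theorem contraction_preserves_complete (W : A → A → S)
    (hadd : ∀ s : S, s + s = s) (habs : ∀ s t : S, s + s * t = s)
    (Z : Finset A) (hcf : wConflictFree W Z) (z : A) (hz : z ∈ Z)
    (W' : A → A → S)
    (hW'zj : ∀ j ∉ Z, W' z j = ∏ i ∈ Z, W i j)
    (hW'jz : ∀ j ∉ Z, W' j z = ∏ i ∈ Z, W j i)
    (hW'jj : ∀ j ∉ Z, ∀ j' ∉ Z, W' j j' = W j j')
    (hW'zz : W' z z = 1) :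
    wCompleteIn W Finset.univ Z ↔
      wCompleteIn W' (insert z (Finset.univ \ Z)) {z} := by
  set U' : Finset A := insert z (Finset.univ \ Z) with hU'
  have hcfP : ∏ x ∈ Z, ∏ y ∈ Z, W x y = 1 := hcf
  have hzZ1 : ∀ i ∈ Z, ∀ j ∈ Z, W i j = 1 := by
    intro i hi j hj
    exact aux_prod_one habs Z _ (aux_prod_one habs Z _ hcfP i hi) j hj
  have hzz1 : insert z ({z} : Finset A) = {z} := by simp
  -- base admissibility equivalence
  have adm_base : wAdmissibleIn W Finset.univ Z ↔ wAdmissibleIn W' U' {z} := by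
    constructor
    · rintro ⟨-, -, hdef⟩
      refine ⟨Finset.singleton_subset_iff.mpr (Finset.mem_insert_self z _), ?_, ?_⟩
      · simp [wConflictFree, Wsets, hW'zz]
      · intro x hx a ha hne
        rw [Finset.mem_singleton] at hx
        rw [hx] at hne ⊢
        rcases Finset.mem_insert.mp ha with haz | h
        · rw [haz] at hne; exact absurd hW'zz hne
        · have haZ : a ∉ Z := (Finset.mem_sdiff.mp h).2
          rw [hW'jz a haZ] at hne
          obtain ⟨i, hi, hWai⟩ : ∃ i ∈ Z, W a i ≠ 1 := by
            by_contra hforall; push_neg at hforall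
            exact hne (Finset.prod_eq_one hforall)
          have hd := hdef i hi a (Finset.mem_univ a) hWai
          rw [Finset.insert_eq_self.mpr hi] at hd
          have e1 : Wsets W' {z} {a} = Wsets W Z {a} := by
            simp [Wsets, hW'zj a haZ]
          have e2 : Wsets W' {a} (insert z {z}) = Wsets W {a} Z := by
            rw [hzz1]; simp [Wsets, hW'jz a haZ]
          rw [e1, e2]; exact hd
    · rintro ⟨-, -, hdef'⟩
      refine ⟨Finset.subset_univ Z, hcf, ?_⟩
      intro b hb a _ hne
      by_cases haZ : a ∈ Z
      · exact absurd (hzZ1 a haZ b hb) hne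
      · have ha' : a ∈ U' :=
          Finset.mem_insert_of_mem (Finset.mem_sdiff.mpr ⟨Finset.mem_univ a, haZ⟩)
        have hne' : W' a z ≠ 1 := by
          rw [hW'jz a haZ]; intro h; exact hne (aux_prod_one habs Z _ h b hb)
        have hd := hdef' z (Finset.mem_singleton_self z) a ha' hne'
        rw [Finset.insert_eq_self.mpr hb]
        have e1 : Wsets W' {z} {a} = Wsets W Z {a} := by
          simp [Wsets, hW'zj a haZ]
        have e2 : Wsets W' {a} (insert z {z}) = Wsets W {a} Z := by
          rw [hzz1]; simp [Wsets, hW'jz a haZ]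
        rw [← e1, ← e2]; exact hd
  -- one-step admissibility equivalence
  have adm_step : ∀ b, b ∉ Z →
      (wAdmissibleIn W Finset.univ (insert b Z) ↔
        wAdmissibleIn W' U' (insert b {z})) := by
    intro b hb
    have hbz : b ≠ z := fun h => hb (h ▸ hz)
    have hbns : b ∉ ({z} : Finset A) := by simp [hbz]
    have hexpW : Wsets W (insert b Z) (insert b Z)
        = W b b * ((∏ i ∈ Z, W b i) * ∏ i ∈ Z, W i b) := by
      simp only [Wsets, Finset.prod_insert hb, Finset.prod_mul_distrib]
      rw [hcfP]; ring
    have hexpW' : Wsets W' (insert b {z}) (insert b {z})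
        = W b b * ((∏ i ∈ Z, W b i) * ∏ i ∈ Z, W i b) := by
      simp only [Wsets, Finset.prod_insert hbns, Finset.prod_singleton]
      rw [hW'jj b hb b hb, hW'jz b hb, hW'zj b hb, hW'zz]
      ring
    have hfacts : W b b * ((∏ i ∈ Z, W b i) * ∏ i ∈ Z, W i b) = 1 →
        W b b = 1 ∧ (∀ i ∈ Z, W b i = 1) ∧ (∀ i ∈ Z, W i b = 1) := by
      intro h1
      obtain ⟨hbb, h2⟩ := aux_mul_eq_one habs h1
      obtain ⟨h3, h4⟩ := aux_mul_eq_one habs h2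
      exact ⟨hbb, aux_prod_one habs Z _ h3, aux_prod_one habs Z _ h4⟩
    have hbU' : b ∈ U' :=
      Finset.mem_insert_of_mem (Finset.mem_sdiff.mpr ⟨Finset.mem_univ b, hb⟩)
    constructor
    · rintro ⟨-, hcfb, hdef⟩
      obtain ⟨f1, f2, f3⟩ := hfacts (hexpW ▸ hcfb)
      refine ⟨?_, ?_, ?_⟩
      · rw [Finset.insert_subset_iff]
        exact ⟨hbU', Finset.singleton_subset_iff.mpr (Finset.mem_insert_self z _)⟩
      · show Wsets W' (insert b {z}) (insert b {z}) = 1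
        rw [hexpW', ← hexpW]; exact hcfb
      · intro x hx a ha hne
        rw [Finset.insert_eq_self.mpr hx]
        rcases Finset.mem_insert.mp ha with haz | haU
        · -- a = z : vacuous
          exfalso
          rw [haz] at hne
          rcases Finset.mem_insert.mp hx with hxb | hxs
          · rw [hxb] at hne
            exact hne (by rw [hW'zj b hb]; exact Finset.prod_eq_one f3)
          · rw [Finset.mem_singleton] at hxs; rw [hxs] at hne
            exact hne hW'zz
        · have haZ : a ∉ Z := (Finset.mem_sdiff.mp haU).2
          by_cases hab : a = b
          · -- a = b : vacuous
            exfalso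
            rw [hab] at hne
            rcases Finset.mem_insert.mp hx with hxb | hxs
            · rw [hxb, hW'jj b hb b hb] at hne; exact hne f1
            · rw [Finset.mem_singleton] at hxs
              rw [hxs, hW'jz b hb] at hne
              exact hne (Finset.prod_eq_one f2)
          · have eL : Wsets W' (insert b {z}) {a} = Wsets W (insert b Z) {a} := by
              simp [Wsets, Finset.prod_insert hbns, Finset.prod_insert hb,
                hW'jj b hb a haZ, hW'zj a haZ]
            have eR : Wsets W' {a} (insert b {z}) = Wsets W {a} (insert b Z) := by
              simp [Wsets, Finset.prod_insert hbns, Finset.prod_insert hb,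
                hW'jj a haZ b hb, hW'jz a haZ]
            rcases Finset.mem_insert.mp hx with hxb | hxs
            · rw [hxb] at hne
              have hne' : W a b ≠ 1 := by rwa [hW'jj a haZ b hb] at hne
              have hd := hdef b (Finset.mem_insert_self b Z) a (Finset.mem_univ a) hne'
              rw [Finset.insert_eq_self.mpr (Finset.mem_insert_self b Z)] at hd
              rw [eL, eR]; exact hd
            · rw [Finset.mem_singleton] at hxs
              rw [hxs, hW'jz a haZ] at hne
              obtain ⟨i, hi, hWai⟩ : ∃ i ∈ Z, W a i ≠ 1 := by
                by_contra hforall; push_neg at hforall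
                exact hne (Finset.prod_eq_one hforall)
              have hd := hdef i (Finset.mem_insert_of_mem hi) a (Finset.mem_univ a) hWai
              rw [Finset.insert_eq_self.mpr (Finset.mem_insert_of_mem hi)] at hd
              rw [eL, eR]; exact hd
    · rintro ⟨-, hcfb', hdef'⟩
      obtain ⟨f1, f2, f3⟩ := hfacts (hexpW' ▸ hcfb')
      refine ⟨Finset.subset_univ _, ?_, ?_⟩
      · show Wsets W (insert b Z) (insert b Z) = 1
        rw [hexpW, ← hexpW']; exact hcfb'
      · intro x hx a _ hne
        rw [Finset.insert_eq_self.mpr hx]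
        by_cases haZ : a ∈ Z
        · -- a ∈ Z : vacuous
          exfalso
          rcases Finset.mem_insert.mp hx with hxb | hxZ
          · rw [hxb] at hne; exact hne (f3 a haZ)
          · exact hne (hzZ1 a haZ x hxZ)
        · by_cases hab : a = b
          · -- a = b : vacuous
            exfalso
            rw [hab] at hne
            rcases Finset.mem_insert.mp hx with hxb | hxZ
            · rw [hxb] at hne; exact hne f1
            · exact hne (f2 x hxZ)
          · have ha' : a ∈ U' :=
              Finset.mem_insert_of_mem (Finset.mem_sdiff.mpr ⟨Finset.mem_univ a, haZ⟩)
            have eL : Wsets W' (insert b {z}) {a} = Wsets W (insert b Z) {a} := by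
              simp [Wsets, Finset.prod_insert hbns, Finset.prod_insert hb,
                hW'jj b hb a haZ, hW'zj a haZ]
            have eR : Wsets W' {a} (insert b {z}) = Wsets W {a} (insert b Z) := by
              simp [Wsets, Finset.prod_insert hbns, Finset.prod_insert hb,
                hW'jj a haZ b hb, hW'jz a haZ]
            rcases Finset.mem_insert.mp hx with hxb | hxZ
            · rw [hxb] at hne
              have hne' : W' a b ≠ 1 := by rw [hW'jj a haZ b hb]; exact hne
              have hd := hdef' b (Finset.mem_insert_self b {z}) a ha' hne'
              rw [Finset.insert_eq_self.mpr (Finset.mem_insert_self b {z})] at hd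
              rw [← eL, ← eR]; exact hd
            · have hne' : W' a z ≠ 1 := by
                rw [hW'jz a haZ]; intro h
                exact hne (aux_prod_one habs Z _ h x hxZ)
              have hd := hdef' z
                (Finset.mem_insert_of_mem (Finset.mem_singleton_self z)) a ha' hne'
              rw [Finset.insert_eq_self.mpr
                (Finset.mem_insert_of_mem (Finset.mem_singleton_self z))] at hd
              rw [← eL, ← eR]; exact hd
  -- assemble completeness equivalence
  constructor
  · rintro ⟨hadm, hcomp⟩
    refine ⟨adm_base.mp hadm, ?_⟩
    intro b hb hadm'
    rcases Finset.mem_insert.mp hb with hbz | hb'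
    · exact Finset.mem_singleton.mpr hbz
    · have hbZ : b ∉ Z := (Finset.mem_sdiff.mp hb').2
      exact absurd (hcomp b (Finset.mem_univ b) ((adm_step b hbZ).mpr hadm')) hbZ
  · rintro ⟨hadm', hcomp'⟩
    refine ⟨adm_base.mpr hadm', ?_⟩
    intro b _ hadmb
    by_cases hbZ : b ∈ Z
    · exact hbZ
    · have hb' : b ∈ U' :=
        Finset.mem_insert_of_mem (Finset.mem_sdiff.mpr ⟨Finset.mem_univ b, hbZ⟩)
      have hbmem := hcomp' b hb' ((adm_step b hbZ).mp hadmb)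
      rw [Finset.mem_singleton] at hbmem
      rw [hbmem] at hbZ
      exact absurd hz hbZ
end

section
/- Let F = ⟨A, R, W, S⟩ be a semiring-based weighted argumentation framework over an absorptive c-semiring S, let Z ⊆ A be a w-admissible extension of F, and let B = A \ (Z ∪ R⁺(Z)). If T ⊆ B is a w-admissible extension of the restricted framework F|_B and every argument of T is w-defended by Z ∪ T in F, then Z ∪ T is a w-admissible extension of F. -/
open Finset

variable {A : Type*} [Fintype A] [DecidableEq A] {S : Type*} [CommSemiring S]

lemma sLE_trans' {a b c : S} (h1 : sLE a b) (h2 : sLE b c) : sLE a c := by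
  unfold sLE at *; rw [← h2, ← add_assoc, h1]

lemma sLE_mul_left' (habs : ∀ s t : S, s + s * t = s) (x y : S) : sLE (x * y) x := by
  unfold sLE; rw [add_comm]; exact habs x y

lemma sLE_one_eq' (habs : ∀ s t : S, s + s * t = s) {x : S} (h : sLE (1 : S) x) : x = 1 := by
  have h1 : (1 : S) + x = 1 := by have := habs 1 x; rwa [one_mul] at this
  unfold sLE at h
  calc x = 1 + x := h.symm
    _ = 1 := h1

lemma Wsets_union_left' (W : A → A → S) {X Y : Finset A} (h : Disjoint X Y) (D : Finset A) :
    Wsets W (X ∪ Y) D = Wsets W X D * Wsets W Y D := Finset.prod_union h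

lemma Wsets_union_right' (W : A → A → S) (C : Finset A) {X Y : Finset A} (h : Disjoint X Y) :
    Wsets W C (X ∪ Y) = Wsets W C X * Wsets W C Y := by
  unfold Wsets
  rw [← Finset.prod_mul_distrib]
  exact Finset.prod_congr rfl fun b _ => Finset.prod_union h

lemma Wsets_singleton_left' (W : A → A → S) (a : A) (D : Finset A) :
    Wsets W {a} D = ∏ d ∈ D, W a d := Finset.prod_singleton _ _

lemma Wsets_singleton_right' (W : A → A → S) (C : Finset A) (a : A) :
    Wsets W C {a} = ∏ b ∈ C, W b a := Finset.prod_congr rfl fun b _ => Finset.prod_singleton _ _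

/-- Division/union theorem: if Z is w-admissible in F, B = A \ (Z ∪ R⁺(Z)) is the
remaining sub-framework's argument set, T ⊆ B is a w-admissible extension of F|_B, and
every argument of T is w-defended by Z ∪ T in F, then Z ∪ T is a w-admissible extension
of F.  (Here a ∈ B iff a ∉ Z and no member of Z attacks a, i.e. W(i,a) = ⊤ for
all i ∈ Z.) -/
theorem union_admissible (W : A → A → S)
    (hadd : ∀ s : S, s + s = s) (habs : ∀ s t : S, s + s * t = s)
    (Z : Finset A) (hZ : wAdmissibleIn W Finset.univ Z)
    (B : Finset A) (hB : ∀ a : A, a ∈ B ↔ a ∉ Z ∧ ∀ i ∈ Z, W i a = 1)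
    (T : Finset A) (hT : T ⊆ B)
    (hTB : wAdmissibleIn W B T)
    (hdef : ∀ t ∈ T, wDefendsIn W Finset.univ (Z ∪ T) t) :
    wAdmissibleIn W Finset.univ (Z ∪ T) := by
  have hdisj : Disjoint Z T :=
    Finset.disjoint_right.mpr fun {t} ht => ((hB t).1 (hT ht)).1
  have hZT : ∀ z ∈ Z, ∀ t ∈ T, W z t = 1 := fun z hz t ht => ((hB t).1 (hT ht)).2 z hz
  -- key: no (weighted) attack from T to Z, in the product sense
  have hTZ : ∀ t ∈ T, ∏ i ∈ Z, W t i = 1 := by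
    intro t ht
    by_cases hall : ∀ i ∈ Z, W t i = 1
    · exact Finset.prod_eq_one hall
    · push_neg at hall
      obtain ⟨i, hi, hti⟩ := hall
      have hle := hZ.2.2 i hi t (Finset.mem_univ t) hti
      have h1 : Wsets W Z {t} = 1 := by
        rw [Wsets_singleton_right']
        exact Finset.prod_eq_one fun z hz => hZT z hz t ht
      rw [h1, Finset.insert_eq_self.mpr hi, Wsets_singleton_left'] at hle
      exact sLE_one_eq' habs hle
  refine ⟨Finset.subset_univ _, ?_, ?_⟩
  · -- conflict freeness
    unfold wConflictFree
    rw [Wsets_union_left' W hdisj, Wsets_union_right' W Z hdisj,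
      Wsets_union_right' W T hdisj, hZ.2.1, hTB.2.1]
    have h1 : Wsets W Z T = 1 :=
      Finset.prod_eq_one fun z hz => Finset.prod_eq_one fun t ht => hZT z hz t ht
    have h2 : Wsets W T Z = 1 := Finset.prod_eq_one fun t ht => hTZ t ht
    rw [h1, h2]; ring
  · -- defense
    intro b hb
    rcases Finset.mem_union.mp hb with hbZ | hbT
    · intro a _ hab
      have hins : insert b (Z ∪ T) = Z ∪ T :=
        Finset.insert_eq_self.mpr (Finset.mem_union_left T hbZ)
      by_cases hattT : ∃ t ∈ T, W a t ≠ 1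
      · obtain ⟨t, ht, hat⟩ := hattT
        have := hdef t ht a (Finset.mem_univ a) hat
        rw [hins]
        rwa [Finset.insert_eq_self.mpr (Finset.mem_union_right Z ht)] at this
      · push_neg at hattT
        have hZdef := hZ.2.2 b hbZ a (Finset.mem_univ a) hab
        rw [Finset.insert_eq_self.mpr hbZ] at hZdef
        have hR : Wsets W {a} (insert b (Z ∪ T)) = Wsets W {a} Z := by
          rw [hins, Wsets_union_right' W _ hdisj]
          have : Wsets W {a} T = 1 := by
            rw [Wsets_singleton_left']
            exact Finset.prod_eq_one hattT
          rw [this, mul_one]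
        rw [hR, Wsets_union_left' W hdisj]
        exact sLE_trans' (sLE_mul_left' habs _ _) hZdef
    · exact hdef b hbT
end
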